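/- Let T be a directed tree such that the set Chi(u) of children of u is countably infinite for every u ∈ V. Then there exists a family λ = {λ_v}_{v∈V°} of nonzero complex numbers such that the weighted shift S_λ is injective and densely defined, D(S_λ) ⊄ D(S_λ*), and D(S_λ²) = {0}. -/

import Mathlib

open scoped ENNReal NNReal Classical

noncomputable section

/-- A directed tree: a directed graph with nonempty vertex set in which each vertex has
at most one parent, there are no circuits, and the underlying undirected graph is
connected and has no cycles (i.e. is a tree). -/
structure DirectedTree (V : Type) where
  edge : V → V → Prop
  nonempty : Nonempty V
  antisymm : ∀ u v : V, edge u v → ¬ edge v u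
  parent_unique : ∀ u v w : V, edge u w → edge v w → u = v
  isTree : (SimpleGraph.fromRel edge).IsTree

namespace DirectedTree

variable {V : Type} (T : DirectedTree V)

/-- The set of children of a vertex. -/
def chi (u : V) : Set V := {v | T.edge u v}

/-- `v` has a parent. -/
def HasParent (v : V) : Prop := ∃ u, T.edge u v

/-- `V⁰`: the set of non-root vertices, i.e. the vertices possessing a parent. -/
def Vcirc : Set V := {v | T.HasParent v}

/-- The tree is leafless if every vertex has a child. -/
def Leafless : Prop := ∀ u : V, (T.chi u).Nonempty

/-- The parent of a vertex (junk value if the vertex is a root). -/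
def par (v : V) : V := if h : T.HasParent v then h.choose else T.nonempty.some

/-- The set of descendants of a vertex. -/
def desc (u : V) : Set V := {w | Relation.ReflTransGen T.edge u w}

/-- The formal weighted shift map `Λ_T` acting on all complex functions on `V`. -/
def Lam (lam : V → ℂ) (f : V → ℂ) : V → ℂ :=
  fun v => if T.HasParent v then lam v * f (T.par v) else 0

/-- The domain of the weighted shift `S_λ`. -/
def domain (lam : V → ℂ) : Set (lp (fun _ : V => ℂ) 2) :=
  {f | Memℓp (T.Lam lam ⇑f) 2}

/-- The weighted shift `S_λ` (extended by `0` outside its domain). -/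
def shift (lam : V → ℂ) (f : lp (fun _ : V => ℂ) 2) : lp (fun _ : V => ℂ) 2 :=
  if h : f ∈ T.domain lam then (⟨T.Lam lam ⇑f, h⟩ : lp (fun _ : V => ℂ) 2) else 0

/-- The domain of `S_λ²`. -/
def squareDomain (lam : V → ℂ) : Set (lp (fun _ : V => ℂ) 2) :=
  {f | f ∈ T.domain lam ∧ T.shift lam f ∈ T.domain lam}

/-- The domain of the adjoint `S_λ*`. -/
def adjDomain (lam : V → ℂ) : Set (lp (fun _ : V => ℂ) 2) :=
  {g | ∃ h : lp (fun _ : V => ℂ) 2,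
    ∀ f ∈ T.domain lam, (inner ℂ (T.shift lam f) g : ℂ) = inner ℂ f h}

/-- `S_λ` is hyponormal: it is densely defined, `D(S_λ) ⊆ D(S_λ*)` and
`‖S_λ* f‖ ≤ ‖S_λ f‖` for every `f ∈ D(S_λ)` (the adjoint value at `f` being any vector
`h` satisfying `⟪S_λ g, f⟫ = ⟪g, h⟫` for all `g ∈ D(S_λ)`; it is unique by density). -/
def IsHyponormal (lam : V → ℂ) : Prop :=
  Dense (T.domain lam) ∧ T.domain lam ⊆ T.adjDomain lam ∧
    ∀ f ∈ T.domain lam, ∀ h : lp (fun _ : V => ℂ) 2,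
      (∀ g ∈ T.domain lam, (inner ℂ (T.shift lam g) f : ℂ) = inner ℂ g h) →
        ‖h‖ ≤ ‖T.shift lam f‖

/-- `ζ_u = (Σ_{v ∈ Chi(u)} |λ_v|²)^{1/2} ∈ [0,∞]`. -/
def zeta (lam : V → ℂ) (u : V) : ℝ≥0∞ :=
  (∑' v : T.chi u, ((‖lam (v : V)‖₊ : ℝ≥0∞)) ^ 2) ^ (1/2 : ℝ)

end DirectedTree


namespace DirectedTree

variable {V : Type} (T : DirectedTree V)

lemma edge_par {v : V} (hv : T.HasParent v) : T.edge (T.par v) v := by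
  rw [par, dif_pos hv]; exact hv.choose_spec

lemma par_eq {u v : V} (huv : T.edge u v) : T.par v = u :=
  T.parent_unique _ _ _ (T.edge_par ⟨u, huv⟩) huv

variable (e : ∀ u : V, ℕ ≃ T.chi u)

/-- index of a vertex among its parent's children -/
def aIdx (v : V) : ℕ :=
  if hv : T.HasParent v then (e (T.par v)).symm ⟨v, T.edge_par hv⟩ else 0

def aT (v : V) : ℝ := if T.HasParent v then 4 ^ (T.aIdx e v) else 1

def wsq (v : V) : ℝ := T.aT e (T.par v) / 2 ^ (T.aIdx e v)

def alam (v : V) : ℂ := ((Real.sqrt (T.wsq e v) : ℝ) : ℂ)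

lemma one_le_aT (v : V) : 1 ≤ T.aT e v := by
  rw [aT]; split
  · exact one_le_pow₀ (by norm_num)
  · exact le_refl 1

lemma wsq_pos (v : V) : 0 < T.wsq e v :=
  div_pos (lt_of_lt_of_le one_pos (T.one_le_aT e _)) (by positivity)

lemma alam_ne (v : V) : T.alam e v ≠ 0 := by
  rw [alam]
  exact Complex.ofReal_ne_zero.2 (ne_of_gt (Real.sqrt_pos.2 (T.wsq_pos e v)))

lemma norm_alam_sq (v : V) : ‖T.alam e v‖ ^ 2 = T.wsq e v := by
  rw [alam, Complex.norm_real, Real.norm_eq_abs, sq_abs, Real.sq_sqrt (T.wsq_pos e v).le]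

lemma child_hasParent (u : V) (n : ℕ) : T.HasParent ((e u n : V)) := ⟨u, (e u n).2⟩

lemma par_child (u : V) (n : ℕ) : T.par ((e u n : V)) = u := T.par_eq (e u n).2

lemma aIdx_eq {u v : V} (huv : T.edge u v) : T.aIdx e v = (e u).symm ⟨v, huv⟩ := by
  have hv : T.HasParent v := ⟨u, huv⟩
  rw [aIdx, dif_pos hv]
  have hpar : T.par v = u := T.par_eq huv
  subst hpar
  rfl

lemma aIdx_child (u : V) (n : ℕ) : T.aIdx e ((e u n : V)) = n := by
  rw [T.aIdx_eq e (e u n).2]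
  simp

lemma aT_child (u : V) (n : ℕ) : T.aT e ((e u n : V)) = 4 ^ n := by
  rw [aT, if_pos (T.child_hasParent e u n), T.aIdx_child e u n]

lemma wsq_child (u : V) (n : ℕ) : T.wsq e ((e u n : V)) = T.aT e u / 2 ^ n := by
  rw [wsq, T.par_child e u n, T.aIdx_child e u n]

end DirectedTree
namespace DirectedTree

variable {V : Type} (T : DirectedTree V) (e : ∀ u : V, ℕ ≃ T.chi u)

lemma lam_term (f : V → ℂ) {u v : V} (huv : T.edge u v) :
    T.Lam (T.alam e) f v = T.alam e v * f u := by
  simp only [Lam]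
  rw [if_pos ⟨u, huv⟩, T.par_eq huv]

lemma lam_noparent (lam : V → ℂ) (f : V → ℂ) {v : V} (hv : ¬ T.HasParent v) :
    T.Lam lam f v = 0 := by
  simp only [Lam, if_neg hv]

lemma mem2 (f : V → ℂ) : Memℓp f 2 ↔ Summable fun v => ‖f v‖ ^ 2 := by
  rw [memℓp_gen_iff (by norm_num)]
  exact summable_congr fun v => by norm_num

lemma norm_sq_lam_term (f : V → ℂ) {u v : V} (huv : T.edge u v) :
    ‖T.Lam (T.alam e) f v‖ ^ 2 = T.wsq e v * ‖f u‖ ^ 2 := by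
  rw [T.lam_term e f huv, norm_mul, mul_pow, T.norm_alam_sq e v]

lemma single_mem (u : V) (cc : ℂ) : lp.single 2 u cc ∈ T.domain (T.alam e) := by
  show Memℓp _ 2
  rw [mem2]
  have hinj : Function.Injective (fun n : ℕ => ((e u n : V))) :=
    fun a b hab => (e u).injective (Subtype.coe_injective hab)
  have hvan : ∀ x ∉ Set.range (fun n : ℕ => ((e u n : V))),
      ‖T.Lam (T.alam e) (⇑(lp.single 2 u cc)) x‖ ^ 2 = 0 := by
    intro x hx
    suffices hz : T.Lam (T.alam e) (⇑(lp.single 2 u cc)) x = 0 by rw [hz]; simp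
    by_cases hxp : T.HasParent x
    · have hne : T.par x ≠ u := by
        intro heq
        apply hx
        have hmem : x ∈ T.chi u := heq ▸ T.edge_par hxp
        exact ⟨(e u).symm ⟨x, hmem⟩, by simp⟩
      simp only [Lam, if_pos hxp]
      rw [lp.single_apply_ne (E := fun _ : V => ℂ) 2 u cc hne, mul_zero]
    · exact T.lam_noparent _ _ hxp
  rw [← hinj.summable_iff hvan]
  have hterm : ∀ n : ℕ, ((fun v => ‖T.Lam (T.alam e) (⇑(lp.single 2 u cc)) v‖ ^ 2) ∘
      (fun n : ℕ => ((e u n : V)))) n = (T.aT e u * ‖cc‖ ^ 2) * (1/2) ^ n := by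
    intro n
    show ‖T.Lam (T.alam e) (⇑(lp.single 2 u cc)) ((e u n : V))‖ ^ 2 = _
    rw [T.norm_sq_lam_term e _ (e u n).2, lp.single_apply_self (E := fun _ : V => ℂ), T.wsq_child e u n]
    rw [div_eq_mul_inv, one_div, inv_pow]
    ring
  rw [summable_congr hterm]
  exact (summable_geometric_of_lt_one (by norm_num) (by norm_num)).mul_left _

lemma lam_fun_zero (lam : V → ℂ) : T.Lam lam (0 : V → ℂ) = 0 := by
  funext v
  simp [Lam]

lemma zero_mem (lam : V → ℂ) : (0 : lp (fun _ : V => ℂ) 2) ∈ T.domain lam := by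
  show Memℓp _ 2
  have : T.Lam lam (⇑(0 : lp (fun _ : V => ℂ) 2)) = 0 := by
    rw [lp.coeFn_zero, T.lam_fun_zero]
  rw [this]
  exact zero_memℓp

lemma add_mem (lam : V → ℂ) {f g : lp (fun _ : V => ℂ) 2}
    (hf : f ∈ T.domain lam) (hg : g ∈ T.domain lam) : f + g ∈ T.domain lam := by
  show Memℓp _ 2
  have : T.Lam lam (⇑(f + g)) = T.Lam lam ⇑f + T.Lam lam ⇑g := by
    funext v
    simp only [Lam, lp.coeFn_add, Pi.add_apply]
    split <;> ring
  rw [this]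
  exact Memℓp.add hf hg

lemma dense_domain : Dense (T.domain (T.alam e)) := by
  intro f
  haveI : Fact (1 ≤ (2 : ℝ≥0∞)) := ⟨by norm_num⟩
  have hs := lp.hasSum_single (by norm_num) f
  refine mem_closure_of_tendsto hs (Filter.Eventually.of_forall fun s => ?_)
  classical
  refine Finset.sum_induction _ (· ∈ T.domain (T.alam e))
    (fun a b ha hb => T.add_mem _ ha hb) (T.zero_mem _) (fun i _ => T.single_mem e i (f i))

lemma injOn_shift : Set.InjOn (T.shift (T.alam e)) (T.domain (T.alam e)) := by
  intro f hf g hg heq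
  rw [shift, dif_pos hf, shift, dif_pos hg] at heq
  have h2 : ∀ v, T.Lam (T.alam e) ⇑f v = T.Lam (T.alam e) ⇑g v :=
    fun v => congrFun (congrArg Subtype.val heq) v
  apply Subtype.ext
  funext u
  have h3 := h2 ((e u 0 : V))
  rw [T.lam_term e _ (e u 0).2, T.lam_term e _ (e u 0).2] at h3
  exact mul_left_cancel₀ (T.alam_ne e _) h3

end DirectedTree
namespace DirectedTree

variable {V : Type} (T : DirectedTree V) (e : ∀ u : V, ℕ ≃ T.chi u)

lemma shift_zero_mem : T.shift (T.alam e) 0 ∈ T.domain (T.alam e) := by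
  rw [shift, dif_pos (T.zero_mem (T.alam e))]
  show Memℓp (T.Lam (T.alam e) (T.Lam (T.alam e) (⇑(0 : lp (fun _ : V => ℂ) 2)))) 2
  rw [lp.coeFn_zero, T.lam_fun_zero, T.lam_fun_zero]
  exact zero_memℓp

lemma squareDomain_eq :
    T.squareDomain (T.alam e) = ({0} : Set (lp (fun _ : V => ℂ) 2)) := by
  ext f
  simp only [Set.mem_singleton_iff, squareDomain, Set.mem_setOf_eq]
  constructor
  · rintro ⟨hdom, hsq⟩
    by_contra hne
    have hex : ∃ u : V, (⇑f : V → ℂ) u ≠ 0 := by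
      by_contra hall
      push_neg at hall
      exact hne (Subtype.ext (funext fun v => hall v))
    obtain ⟨u, hu⟩ := hex
    rw [shift, dif_pos hdom] at hsq
    have hsq' : Summable fun v =>
        ‖T.Lam (T.alam e) (T.Lam (T.alam e) ⇑f) v‖ ^ 2 := by
      rw [← mem2]
      exact hsq
    have hinj : Function.Injective (fun n : ℕ => ((e ((e u n : V)) 0 : V))) := by
      intro a b hab
      have hpar : T.par ((e ((e u a : V)) 0 : V)) = T.par ((e ((e u b : V)) 0 : V)) :=
        congrArg T.par hab
      rw [T.par_child, T.par_child] at hpar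
      exact (e u).injective (Subtype.coe_injective hpar)
    have hcomp := hsq'.comp_injective hinj
    have hterm : ∀ n : ℕ, ((fun v => ‖T.Lam (T.alam e) (T.Lam (T.alam e) ⇑f) v‖ ^ 2) ∘
        (fun n : ℕ => ((e ((e u n : V)) 0 : V)))) n
        = 2 ^ n * (T.aT e u * ‖(⇑f : V → ℂ) u‖ ^ 2) := by
      intro n
      show ‖T.Lam (T.alam e) (T.Lam (T.alam e) ⇑f) ((e ((e u n : V)) 0 : V))‖ ^ 2 = _
      rw [T.norm_sq_lam_term e _ (e ((e u n : V)) 0).2,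
        T.norm_sq_lam_term e _ (e u n).2, T.wsq_child e ((e u n : V)) 0,
        T.wsq_child e u n, T.aT_child e u n]
      rw [pow_zero, div_one]
      rw [show (4 : ℝ) ^ n = 2 ^ n * 2 ^ n by rw [← mul_pow]; norm_num]
      field_simp
    rw [summable_congr hterm] at hcomp
    have hC : 0 < T.aT e u * ‖(⇑f : V → ℂ) u‖ ^ 2 := by
      have := T.one_le_aT e u
      have h2 : 0 < ‖(⇑f : V → ℂ) u‖ ^ 2 := pow_pos (norm_pos_iff.mpr hu) 2
      nlinarith
    have htend := hcomp.tendsto_atTop_zero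
    have hev := htend.eventually_lt_const hC
    obtain ⟨n, hn⟩ := hev.exists
    have : T.aT e u * ‖(⇑f : V → ℂ) u‖ ^ 2 ≤ 2 ^ n * (T.aT e u * ‖(⇑f : V → ℂ) u‖ ^ 2) :=
      le_mul_of_one_le_left hC.le (one_le_pow₀ (by norm_num))
    linarith
  · rintro rfl
    exact ⟨T.zero_mem _, T.shift_zero_mem e⟩

end DirectedTree
namespace DirectedTree

variable {V : Type} (T : DirectedTree V) (e : ∀ u : V, ℕ ≃ T.chi u)

def aw (j : ℕ) : V := ((e T.nonempty.some j : V))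

def az (j : ℕ) : V := ((e (T.aw e j) 0 : V))

def ac (j : ℕ) : ℝ := (1/2) ^ j / Real.sqrt (j + 1)

def aG (v : V) : ℂ := if h : ∃ j, T.az e j = v then ((ac h.choose : ℝ) : ℂ) else 0

lemma aw_inj : Function.Injective (T.aw e) := fun a b hab =>
  (e T.nonempty.some).injective (Subtype.coe_injective hab)

lemma par_az (j : ℕ) : T.par (T.az e j) = T.aw e j := T.par_child e _ 0

lemma az_inj : Function.Injective (T.az e) := by
  intro a b hab
  have := congrArg T.par hab
  rw [T.par_az, T.par_az] at this
  exact T.aw_inj e this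

lemma ac_pos (j : ℕ) : 0 < ac j := by
  rw [ac]
  positivity

lemma aG_az (j : ℕ) : T.aG e (T.az e j) = ((ac j : ℝ) : ℂ) := by
  rw [aG, dif_pos ⟨j, rfl⟩]
  congr 2
  exact T.az_inj e (⟨j, rfl⟩ : ∃ k, T.az e k = T.az e j).choose_spec

lemma aG_eq_zero {v : V} (hv : ∀ j, T.az e j ≠ v) : T.aG e v = 0 := by
  rw [aG, dif_neg]
  rintro ⟨j, hj⟩
  exact hv j hj

lemma ac_sq (j : ℕ) : ac j ^ 2 = (1/4) ^ j / ((j : ℝ) + 1) := by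
  rw [ac, div_pow, Real.sq_sqrt (by positivity)]
  congr 1
  rw [← pow_mul, mul_comm, pow_mul]
  norm_num

lemma summable_ac_sq : Summable fun j : ℕ => ac j ^ 2 := by
  refine Summable.of_nonneg_of_le (fun j => (sq_nonneg _))
    (fun j => ?_) (summable_geometric_of_lt_one (by norm_num) (by norm_num) (r := 1/4))
  rw [ac_sq]
  exact div_le_self (by positivity) (by push_cast; linarith [Nat.cast_nonneg (α := ℝ) j])

lemma aG_mem : Memℓp (T.aG e) 2 := by
  rw [mem2]
  have hvan : ∀ x ∉ Set.range (T.az e), ‖T.aG e x‖ ^ 2 = 0 := by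
    intro x hx
    rw [T.aG_eq_zero e (fun j hj => hx ⟨j, hj⟩)]
    simp
  rw [← (T.az_inj e).summable_iff hvan]
  refine (summable_congr fun j => ?_).2 (summable_ac_sq)
  show ‖T.aG e (T.az e j)‖ ^ 2 = _
  rw [T.aG_az e j, Complex.norm_real, Real.norm_eq_abs, sq_abs]

lemma alam_az (j : ℕ) : T.alam e (T.az e j) = (((2 : ℝ) ^ j : ℝ) : ℂ) := by
  rw [alam]
  congr 1
  rw [az, T.wsq_child e _ 0, pow_zero, div_one, aw, T.aT_child e _ j]
  rw [show (4 : ℝ) ^ j = ((2 : ℝ) ^ j) ^ 2 by rw [← pow_mul, mul_comm, pow_mul]; norm_num]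
  exact Real.sqrt_sq (by positivity)

/-- The element `g` of `ℓ²`. -/
def gElt : lp (fun _ : V => ℂ) 2 := ⟨T.aG e, T.aG_mem e⟩

lemma gElt_mem : T.gElt e ∈ T.domain (T.alam e) := by
  show Memℓp (T.Lam (T.alam e) (T.aG e)) 2
  rw [mem2]
  set F : ℕ × ℕ → V := fun p => ((e (T.az e p.1) p.2 : V)) with hF
  have hinj : Function.Injective F := by
    intro a b hab
    have hpar : T.az e a.1 = T.az e b.1 := by
      have := congrArg T.par hab
      rwa [hF, T.par_child, T.par_child] at this
    have h1 : a.1 = b.1 := T.az_inj e hpar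
    have h2 : a.2 = b.2 := by
      apply (e (T.az e a.1)).injective
      apply Subtype.coe_injective
      show ((e (T.az e a.1) a.2 : V)) = ((e (T.az e a.1) b.2 : V))
      exact hab.trans (congrArg (fun u => ((e u b.2 : V))) hpar).symm
    exact Prod.ext h1 h2
  have hvan : ∀ x ∉ Set.range F, ‖T.Lam (T.alam e) (T.aG e) x‖ ^ 2 = 0 := by
    intro x hx
    suffices hz : T.Lam (T.alam e) (T.aG e) x = 0 by rw [hz]; simp
    by_cases hxp : T.HasParent x
    · simp only [Lam, if_pos hxp]
      rcases eq_or_ne (T.aG e (T.par x)) 0 with hG | hG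
      · rw [hG, mul_zero]
      · exfalso
        have hex : ∃ j, T.az e j = T.par x := by
          by_contra hc
          push_neg at hc
          exact hG (T.aG_eq_zero e hc)
        obtain ⟨j, hj⟩ := hex
        apply hx
        have hmem : x ∈ T.chi (T.az e j) := hj ▸ T.edge_par hxp
        exact ⟨(j, (e (T.az e j)).symm ⟨x, hmem⟩), by simp [hF]⟩
    · exact T.lam_noparent _ _ hxp
  rw [← hinj.summable_iff hvan]
  have hterm : ∀ p : ℕ × ℕ, ((fun v => ‖T.Lam (T.alam e) (T.aG e) v‖ ^ 2) ∘ F) p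
      = (ac p.1 ^ 2) * ((1/2) ^ p.2 : ℝ) := by
    intro p
    show ‖T.Lam (T.alam e) (T.aG e) ((e (T.az e p.1) p.2 : V))‖ ^ 2 = _
    rw [T.norm_sq_lam_term e _ (e (T.az e p.1) p.2).2, T.wsq_child e _ p.2]
    rw [show T.aT e (T.az e p.1) = 1 by
      rw [aT, if_pos ⟨T.aw e p.1, (e (T.aw e p.1) 0).2⟩, az, T.aIdx_child e _ 0, pow_zero]]
    rw [T.aG_az e p.1, Complex.norm_real, Real.norm_eq_abs, sq_abs]
    rw [div_pow, one_pow]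
    ring
  rw [summable_congr hterm]
  exact (summable_ac_sq).mul_of_nonneg
    (summable_geometric_of_lt_one (by norm_num) (by norm_num))
    (fun j => sq_nonneg _) (fun m => by positivity)

end DirectedTree
namespace DirectedTree

variable {V : Type} (T : DirectedTree V) (e : ∀ u : V, ℕ ≃ T.chi u)

lemma coe_shift (lam : V → ℂ) {f : lp (fun _ : V => ℂ) 2} (hf : f ∈ T.domain lam) :
    ⇑(T.shift lam f) = T.Lam lam ⇑f := by
  rw [shift, dif_pos hf]

lemma coe_gElt : ⇑(T.gElt e) = T.aG e := rfl

lemma two_pow_mul_ac (j : ℕ) : (2:ℝ) ^ j * ac j = 1 / Real.sqrt ((j:ℝ) + 1) := by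
  rw [ac, ← mul_div_assoc, ← mul_pow]
  norm_num

lemma not_summable_harm : ¬ Summable (fun j : ℕ => 1 / ((j:ℝ) + 1)) := by
  intro hs
  have hs' : Summable (fun n : ℕ => 1 / (((n + 1 : ℕ)):ℝ)) := by push_cast; exact hs
  exact Real.not_summable_one_div_natCast ((summable_nat_add_iff 1).1 hs')

lemma not_subset_adj : ¬ (T.domain (T.alam e) ⊆ T.adjDomain (T.alam e)) := by
  intro hsub
  obtain ⟨hvec, hhv⟩ := hsub (T.gElt_mem e)
  have key : ∀ j : ℕ, (⇑hvec : V → ℂ) (T.aw e j) = (((2:ℝ) ^ j * ac j : ℝ) : ℂ) := by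
    intro j
    have hmem := T.single_mem e (T.aw e j) (1 : ℂ)
    have heq := hhv _ hmem
    have hrhs : (inner ℂ (lp.single 2 (T.aw e j) (1:ℂ)) hvec : ℂ)
        = (⇑hvec : V → ℂ) (T.aw e j) := by
      rw [lp.inner_single_left, RCLike.inner_apply, map_one, mul_one]
    have hz : ∀ v : V, v ≠ T.az e j →
        (inner ℂ (T.Lam (T.alam e) (⇑(lp.single 2 (T.aw e j) (1:ℂ))) v)
          (T.aG e v) : ℂ) = 0 := by
      intro v hv
      rw [RCLike.inner_apply]
      by_cases hxp : T.HasParent v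
      · rcases eq_or_ne (T.aG e v) 0 with hG | hG
        · rw [hG, zero_mul]
        · have hex : ∃ k, T.az e k = v := by
            by_contra hc
            push_neg at hc
            exact hG (T.aG_eq_zero e hc)
          obtain ⟨k, hk⟩ := hex
          have hkj : k ≠ j := fun hkj => hv (hkj ▸ hk.symm)
          have hparv : T.par v = T.aw e k := hk ▸ T.par_az e k
          simp only [Lam, if_pos hxp, hparv]
          rw [lp.single_apply_ne (E := fun _ : V => ℂ) 2 (T.aw e j) (1:ℂ)
            (fun hh => hkj (T.aw_inj e hh)), mul_zero, map_zero, mul_zero]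
      · rw [T.lam_noparent _ _ hxp, map_zero, mul_zero]
    have hSz : T.Lam (T.alam e) (⇑(lp.single 2 (T.aw e j) (1:ℂ))) (T.az e j)
        = T.alam e (T.az e j) := by
      rw [show T.az e j = ((e (T.aw e j) 0 : V)) from rfl,
        T.lam_term e _ (e (T.aw e j) 0).2, lp.single_apply_self (E := fun _ : V => ℂ),
        mul_one]
    have hz' : ∀ v : V, v ≠ T.az e j →
        (inner ℂ ((T.shift (T.alam e) (lp.single 2 (T.aw e j) (1:ℂ))) v)
          ((T.gElt e) v) : ℂ) = 0 := by
      intro v hv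
      rw [T.coe_shift _ hmem, T.coe_gElt e]
      exact hz v hv
    have hs2 := _root_.hasSum_single (f := fun v : V =>
        (inner ℂ ((T.shift (T.alam e) (lp.single 2 (T.aw e j) (1:ℂ))) v)
          ((T.gElt e) v) : ℂ)) (T.az e j) hz'
    have hval : (inner ℂ ((T.shift (T.alam e) (lp.single 2 (T.aw e j) (1:ℂ))) (T.az e j))
        ((T.gElt e) (T.az e j)) : ℂ) = (((2:ℝ) ^ j * ac j : ℝ) : ℂ) := by
      rw [T.coe_shift _ hmem, T.coe_gElt e]
      rw [RCLike.inner_apply, hSz, T.alam_az e j]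
      show T.aG e (T.az e j) * (starRingEnd ℂ) _ = _
      rw [T.aG_az e j, Complex.conj_ofReal, ← Complex.ofReal_mul, mul_comm]
    simp only [hval] at hs2
    have hlhs : (inner ℂ (T.shift (T.alam e) (lp.single 2 (T.aw e j) (1:ℂ)))
        (T.gElt e) : ℂ) = (((2:ℝ) ^ j * ac j : ℝ) : ℂ) :=
      (lp.hasSum_inner (𝕜 := ℂ) (T.shift (T.alam e) (lp.single 2 (T.aw e j) (1:ℂ)))
        (T.gElt e)).unique hs2
    rw [hlhs, hrhs] at heq
    exact heq.symm
  have hsum : Summable fun v : V => ‖(⇑hvec : V → ℂ) v‖ ^ 2 := (mem2 _).1 (lp.memℓp hvec)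
  have hcomp := hsum.comp_injective (T.aw_inj e)
  have hfin : Summable fun j : ℕ => 1 / ((j:ℝ) + 1) := by
    refine hcomp.congr fun j => ?_
    show ‖(⇑hvec : V → ℂ) (T.aw e j)‖ ^ 2 = _
    rw [key j, Complex.norm_real, Real.norm_eq_abs, sq_abs, two_pow_mul_ac, div_pow, one_pow,
      Real.sq_sqrt (by positivity)]
  exact not_summable_harm hfin

end DirectedTree


/-- Theorem 3.2: if every vertex has countably infinitely many children, then there is a
family of nonzero weights such that `S_λ` is injective and densely defined,
`D(S_λ) ⊄ D(S_λ*)`, and `D(S_λ²) = {0}`. -/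
theorem stmt11 {V : Type} (T : DirectedTree V)
    (h : ∀ u : V, (T.chi u).Countable ∧ (T.chi u).Infinite) :
    ∃ lam : V → ℂ, (∀ v ∈ T.Vcirc, lam v ≠ 0) ∧
      Set.InjOn (T.shift lam) (T.domain lam) ∧ Dense (T.domain lam) ∧
      ¬ (T.domain lam ⊆ T.adjDomain lam) ∧
      T.squareDomain lam = ({0} : Set (lp (fun _ : V => ℂ) 2)) := by
  have hden : ∀ u : V, Nonempty (ℕ ≃ T.chi u) := by
    intro u
    have h1 : Countable (T.chi u) := (h u).1.to_subtype
    have h2 : Infinite (T.chi u) := (h u).2.to_subtype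
    obtain ⟨d⟩ := nonempty_denumerable (T.chi u)
    exact ⟨(Denumerable.eqv (T.chi u)).symm⟩
  let e : ∀ u : V, ℕ ≃ T.chi u := fun u => Classical.choice (hden u)
  exact ⟨T.alam e, fun v _ => T.alam_ne e v, T.injOn_shift e, T.dense_domain e,
    T.not_subset_adj e, T.squareDomain_eq e⟩
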